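/- (Gelfand's identity) For integers m, n >= 0 not both zero, (-1)^{n-1} * sum_{k=1}^{m} binomial(m, k-1) * B_{n+k}/(n+k) + (-1)^{m-1} * sum_{k=1}^{n} binomial(n, k-1) * B_{m+k}/(m+k) = m! * n! / (m+n+1)!. -/

import Mathlib

open Finset

noncomputable def gelG (a b : ℕ) : ℚ :=
  ∑ j ∈ range a, (a.choose j : ℚ) * bernoulli (b + j + 1) / (b + j + 1)

lemma gelG_eq (a b : ℕ) :
    ∑ k ∈ Icc 1 a, (a.choose (k - 1) : ℚ) * bernoulli (b + k) / ((b : ℚ) + k) = gelG a b := by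
  rw [gelG, ← Finset.Ico_add_one_right_eq_Icc, sum_Ico_eq_sum_range]
  simp only [Nat.add_sub_cancel, Nat.succ_sub_one]
  apply Finset.sum_congr rfl
  intro j _
  have h1 : 1 + j - 1 = j := by omega
  have h2 : b + (1 + j) = b + j + 1 := by ring
  rw [h1, h2]
  push_cast
  ring_nf

lemma gelG_zero (b : ℕ) : gelG 0 b = 0 := by simp [gelG]

lemma bernoulli_odd_zero {n : ℕ} (h : Odd n) (h1 : 1 < n) : bernoulli n = 0 := by
  rw [bernoulli_eq_bernoulli'_of_ne_one (by omega), bernoulli'_eq_zero_of_odd h h1]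

lemma gelG_succ (a b : ℕ) :
    gelG (a + 1) b = gelG a b + gelG a (b + 1) + bernoulli (a + b + 1) / (a + b + 1) := by
  have e1 := Finset.sum_range_succ
    (fun j => (a.choose j : ℚ) * bernoulli (b + j + 1) / (b + j + 1)) a
  have e2 := Finset.sum_range_succ'
    (fun j => (a.choose j : ℚ) * bernoulli (b + j + 1) / (b + j + 1)) a
  have h1 : ∑ i ∈ range a, ((a+1).choose (i+1) : ℚ) * bernoulli (b + (i+1) + 1) / (↑b + ↑(i+1) + 1)
      = ∑ i ∈ range a, ((a.choose i : ℚ) * bernoulli ((b+1) + i + 1) / (↑(b+1) + ↑i + 1)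
        + (a.choose (i+1) : ℚ) * bernoulli (b + (i+1) + 1) / (↑b + ↑(i+1) + 1)) := by
    apply Finset.sum_congr rfl
    intro i _
    rw [Nat.choose_succ_succ]
    have hn : b + (i+1) + 1 = (b+1) + i + 1 := by omega
    rw [hn]
    push_cast
    ring
  rw [gelG, sum_range_succ', h1, Finset.sum_add_distrib]
  rw [gelG, gelG]
  simp only [Nat.choose_zero_right, Nat.cast_one, one_mul, Nat.choose_succ_self_right] at e1 e2 ⊢
  have hc : (a.choose a : ℚ) = 1 := by simp
  rw [hc, one_mul] at e1
  have hd : b + a + 1 = a + b + 1 := by omega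
  rw [hd] at e1
  have hq : ((b:ℚ) + a + 1) = ((a:ℚ) + b + 1) := by ring
  rw [hq] at e1
  push_cast at e1 e2 ⊢
  linarith [e1, e2]

lemma gelG_base (n : ℕ) (hn : 1 ≤ n) : gelG n 0 = -1 / (n + 1) := by
  have hne : ((n : ℚ) + 1) ≠ 0 := by positivity
  have key : ((n : ℚ) + 1) * gelG n 0 = -1 := by
    rw [gelG, Finset.mul_sum]
    have step : ∀ j ∈ range n, ((n : ℚ) + 1) * ((n.choose j : ℚ) * bernoulli (0 + j + 1) / (↑(0:ℕ) + ↑j + 1))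
        = ((n+1).choose (j+1) : ℚ) * bernoulli (j + 1) := by
      intro j _
      have hc := Nat.add_one_mul_choose_eq n j
      have hcq : ((n : ℚ) + 1) * (n.choose j : ℚ) = ((n+1).choose (j+1) : ℚ) * ((j : ℚ) + 1) := by
        exact_mod_cast congrArg (Nat.cast : ℕ → ℚ) hc
      have hz : ((0:ℕ) : ℚ) + (j : ℚ) + 1 ≠ 0 := by push_cast; positivity
      have hj : (0 : ℕ) + j + 1 = j + 1 := by omega
      rw [hj]
      field_simp
      linear_combination bernoulli (j + 1) * hcq
    rw [Finset.sum_congr rfl step]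
    have e := Finset.sum_range_succ' (fun i => ((n+1).choose i : ℚ) * bernoulli i) n
    rw [sum_bernoulli] at e
    have hn1 : n + 1 ≠ 1 := by omega
    simp only [hn1, if_false, Nat.choose_zero_right, Nat.cast_one, one_mul, bernoulli_zero] at e
    linarith [e]
  field_simp at key ⊢
  linarith [key]

lemma gelsign (m n : ℕ) (h : ¬(m = 0 ∧ n = 0)) :
    ((-1:ℚ)^(n+1) - (-1:ℚ)^m) * (bernoulli (m+n+1) / ((m:ℚ) + (n:ℚ) + 1)) = 0 := by
  rcases Nat.even_or_odd (m + n) with he | ho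
  · have h1 : 1 ≤ m + n := by omega
    have hodd : Odd (m + n + 1) := Even.add_one he
    rw [bernoulli_odd_zero hodd (by omega)]
    simp
  · have hsign : ((-1:ℚ)^(n+1)) = (-1:ℚ)^m := by
      rw [neg_one_pow_eq_pow_mod_two, neg_one_pow_eq_pow_mod_two (n := m)]
      rw [Nat.odd_iff] at ho
      congr 1
      omega
    rw [hsign]
    ring

lemma gelR_rec (m n : ℕ) :
    ((m+1).factorial : ℚ) * (n.factorial : ℚ) / ((m + 1 + n + 1).factorial : ℚ)
      = (m.factorial : ℚ) * (n.factorial : ℚ) / ((m + n + 1).factorial : ℚ)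
        - (m.factorial : ℚ) * ((n+1).factorial : ℚ) / ((m + (n + 1) + 1).factorial : ℚ) := by
  have h1 : m + 1 + n + 1 = (m + n + 1) + 1 := by omega
  have h2 : m + (n + 1) + 1 = (m + n + 1) + 1 := by omega
  rw [h1, h2, Nat.factorial_succ (m + n + 1), Nat.factorial_succ m, Nat.factorial_succ n]
  have f1 : ((m + n + 1).factorial : ℚ) ≠ 0 := by exact_mod_cast (m+n+1).factorial_ne_zero
  have f2 : ((m : ℚ) + (n : ℚ) + 1 + 1) ≠ 0 := by positivity
  push_cast
  field_simp
  ring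

theorem gelfand (m n : ℕ) (h : ¬(m = 0 ∧ n = 0)) :
    (-1 : ℚ) ^ (n + 1) * ∑ k ∈ Icc 1 m, (m.choose (k - 1) : ℚ) * bernoulli (n + k) / (n + k)
      + (-1 : ℚ) ^ (m + 1) * ∑ k ∈ Icc 1 n, (n.choose (k - 1) : ℚ) * bernoulli (m + k) / (m + k)
    = (m.factorial : ℚ) * (n.factorial : ℚ) / ((m + n + 1).factorial : ℚ) := by
  rw [gelG_eq, gelG_eq]
  induction m generalizing n with
  | zero =>
    have hn : 1 ≤ n := by omega
    rw [gelG_zero, gelG_base n hn]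
    have h1 : 0 + n + 1 = n + 1 := by omega
    rw [h1, Nat.factorial_succ n]
    have f2 : ((n : ℚ) + 1) ≠ 0 := by positivity
    have f1 : ((n.factorial : ℚ)) ≠ 0 := by exact_mod_cast n.factorial_ne_zero
    simp only [Nat.factorial_zero, Nat.cast_one, pow_one]
    push_cast
    field_simp
    ring
  | succ m ih =>
    by_cases hm : m = 0 ∧ n = 0
    · obtain ⟨hm0, hn0⟩ := hm
      subst hm0; subst hn0
      norm_num [gelG, Nat.factorial]
    · have ih1 := ih n hm
      have ih2 := ih (n + 1) (by simp)
      have h2 := gelG_succ m n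
      have h3 := gelG_succ n m
      have h3' : n + m + 1 = m + n + 1 := by omega
      rw [h3'] at h3
      have hs := gelsign m n hm
      have hr := gelR_rec m n
      rw [h2]
      linear_combination ih1 - ih2 - ((-1:ℚ)^m) * h3 + hs - hr
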